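/- arXiv:1612.01672 — 2 statements merged into one kernel-verified Lean document; each statement's English description precedes it below -/
import Mathlib

section
/- Let ‖·‖ be a norm on ℝ^b, Γ ⊂ ℝ^b a full-rank lattice, and Θ = Γ \ {0}. Then for every real z with 0 < z < b, the series ∑_{θ ∈ Θ} ‖θ‖^{-z} diverges (the family is not summable). -/
open Finset in
/-- For a norm `N` on `ℝ^b` and a full-rank lattice `Γ`, the series
`∑_{θ ∈ Γ \ {0}} N(θ)^{-z}` diverges for every real `z` with `0 < z < b`. -/
theorem stmt_2 (b : ℕ)
    (Γ : Submodule ℤ (EuclideanSpace ℝ (Fin b))) [DiscreteTopology Γ] [IsZLattice ℝ Γ]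
    (N : EuclideanSpace ℝ (Fin b) → ℝ)
    (hN0 : ∀ x, N x = 0 ↔ x = 0)
    (hNsmul : ∀ (c : ℝ) x, N (c • x) = |c| * N x)
    (hNadd : ∀ x y, N (x + y) ≤ N x + N y)
    (z : ℝ) (hz0 : 0 < z) (hz : z < (b : ℝ)) :
    ¬ Summable fun θ : {x : EuclideanSpace ℝ (Fin b) // x ∈ Γ ∧ x ≠ 0} =>
      (N θ.1) ^ (-z) := by
  intro hsum
  classical
  have hb : 0 < b := by exact_mod_cast hz0.trans hz
  -- N is nonnegative
  have hNneg : ∀ x, N (-x) = N x := by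
    intro x
    rw [← neg_one_smul ℝ x, hNsmul]
    norm_num
  have hN0' : N 0 = 0 := (hN0 0).2 rfl
  have hNnonneg : ∀ x, 0 ≤ N x := by
    intro x
    have h := hNadd x (-x)
    rw [add_neg_cancel, hN0', hNneg] at h
    linarith
  -- a ℤ-basis of Γ indexed by Fin b
  have : Module.Free ℤ Γ := ZLattice.module_free ℝ Γ
  have : Module.Finite ℤ Γ := ZLattice.module_finite ℝ Γ
  have hrank : Module.finrank ℤ Γ = b := by
    rw [ZLattice.rank ℝ Γ, finrank_euclideanSpace_fin]
  let B0 := Module.Free.chooseBasis ℤ Γ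
  have hcard : Fintype.card (Module.Free.ChooseBasisIndex ℤ Γ) = b :=
    (Module.finrank_eq_card_chooseBasisIndex ℤ Γ).symm.trans hrank
  have : Nonempty (Fin b) := ⟨⟨0, hb⟩⟩
  let B : Module.Basis (Fin b) ℤ Γ := B0.reindex (Fintype.equivFinOfCardEq hcard)
  set v : Fin b → EuclideanSpace ℝ (Fin b) := fun i => (B i : EuclideanSpace ℝ (Fin b)) with hv
  set D : ℝ := ∑ i, N (v i) with hD
  have hvne : ∀ i, v i ≠ 0 := by
    intro i h
    exact B.ne_zero i (Subtype.ext h)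
  have hDpos : 0 < D := by
    have hne : (Finset.univ : Finset (Fin b)).Nonempty := univ_nonempty
    refine Finset.sum_pos (fun i _ => ?_) hne
    rcases lt_or_eq_of_le (hNnonneg (v i)) with h | h
    · exact h
    · exact absurd ((hN0 (v i)).1 h.symm) (hvne i)
  -- the grid map
  set g : (Fin b → ℕ) → Γ := fun m => B.equivFun.symm (fun i => (m i : ℤ) + 1) with hg
  have hginj : Function.Injective g := by
    intro m m' h
    have h2 := B.equivFun.symm.injective h
    funext i
    have := congrFun h2 i
    omega
  have hgne : ∀ m, (g m : EuclideanSpace ℝ (Fin b)) ≠ 0 := by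
    intro m h
    have h1 : g m = 0 := Subtype.ext h
    have h2 : (fun i => ((m i : ℤ) + 1)) = (0 : Fin b → ℤ) :=
      B.equivFun.symm.injective (h1.trans (map_zero _).symm)
    have h3 := congrFun h2 ⟨0, hb⟩
    simp only [Pi.zero_apply] at h3
    omega
  have hgval : ∀ m, (g m : EuclideanSpace ℝ (Fin b)) = ∑ i, ((m i : ℝ) + 1) • v i := by
    intro m
    rw [hg]
    simp only [Module.Basis.equivFun_symm_apply, Submodule.coe_sum, Submodule.coe_smul]
    refine Finset.sum_congr rfl fun i _ => ?_
    rw [← Int.cast_smul_eq_zsmul ℝ]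
    push_cast
    rfl
  -- norm bound on the box
  have hNg : ∀ (n : ℕ) (m : Fin b → ℕ), (∀ i, m i ≤ n) →
      N (g m : EuclideanSpace ℝ (Fin b)) ≤ ((n : ℝ) + 1) * D := by
    intro n m hm
    rw [hgval]
    calc N (∑ i, ((m i : ℝ) + 1) • v i) ≤ ∑ i, N (((m i : ℝ) + 1) • v i) :=
          Finset.le_sum_of_subadditive N hN0'.le hNadd _ _
      _ = ∑ i, |(m i : ℝ) + 1| * N (v i) := by simp only [hNsmul]
      _ ≤ ∑ i, ((n : ℝ) + 1) * N (v i) := by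
          refine Finset.sum_le_sum fun i _ => ?_
          have h1 : |(m i : ℝ) + 1| = (m i : ℝ) + 1 := abs_of_nonneg (by positivity)
          have h2 : (m i : ℝ) ≤ n := by exact_mod_cast hm i
          have := hNnonneg (v i)
          nlinarith
      _ = ((n : ℝ) + 1) * D := by rw [hD, Finset.mul_sum]
  have hNgpos : ∀ m, 0 < N (g m : EuclideanSpace ℝ (Fin b)) := by
    intro m
    rcases lt_or_eq_of_le (hNnonneg _) with h | h
    · exact h
    · exact absurd ((hN0 _).1 h.symm) (hgne m)
  -- inject into the summation index
  set θf : (Fin b → ℕ) → {x : EuclideanSpace ℝ (Fin b) // x ∈ Γ ∧ x ≠ 0} :=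
    fun m => ⟨(g m : EuclideanSpace ℝ (Fin b)), (g m).2, hgne m⟩ with hθf
  have hθinj : Function.Injective θf := by
    intro m m' h
    rw [hθf, Subtype.mk.injEq] at h
    exact hginj (Subtype.ext h)
  set F : {x : EuclideanSpace ℝ (Fin b) // x ∈ Γ ∧ x ≠ 0} → ℝ :=
    fun θ => (N θ.1) ^ (-z) with hF
  have hFnonneg : ∀ θ, 0 ≤ F θ := fun θ => Real.rpow_nonneg (hNnonneg _) _
  set S : ℝ := ∑' θ, F θ with hS
  -- key bound: for every n, (n+1)^(b - z) * D^(-z) ≤ S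
  have key : ∀ n : ℕ, ((n : ℝ) + 1) ^ ((b : ℝ) - z) * D ^ (-z) ≤ S := by
    intro n
    set box : Finset (Fin b → ℕ) := Fintype.piFinset fun _ => Finset.range (n + 1) with hbox
    have hsum_le : ∑ m ∈ box, F (θf m) ≤ S := by
      rw [← Finset.sum_image (fun m _ m' _ h => hθinj h)]
      exact Summable.sum_le_tsum _ (fun θ _ => hFnonneg θ) hsum
    have hterm : ∀ m ∈ box, (((n : ℝ) + 1) * D) ^ (-z) ≤ F (θf m) := by
      intro m hm
      have hmn : ∀ i, m i ≤ n := by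
        intro i
        have := Fintype.mem_piFinset.1 hm i
        simpa [Nat.lt_succ_iff] using Finset.mem_range.1 this
      exact Real.rpow_le_rpow_of_nonpos (hNgpos m) (hNg n m hmn) (by linarith)
    have hcardbox : (box.card : ℝ) = ((n : ℝ) + 1) ^ (b : ℕ) := by
      rw [hbox, Fintype.card_piFinset]
      push_cast
      simp
    have hlow : (box.card : ℝ) * (((n : ℝ) + 1) * D) ^ (-z) ≤ ∑ m ∈ box, F (θf m) := by
      have := Finset.card_nsmul_le_sum box (fun m => F (θf m)) ((((n : ℝ) + 1) * D) ^ (-z)) hterm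
      simpa [nsmul_eq_mul] using this
    have hn1 : (0 : ℝ) < (n : ℝ) + 1 := by positivity
    have hrw : (box.card : ℝ) * (((n : ℝ) + 1) * D) ^ (-z)
        = ((n : ℝ) + 1) ^ ((b : ℝ) - z) * D ^ (-z) := by
      rw [hcardbox, Real.mul_rpow hn1.le hDpos.le, ← Real.rpow_natCast ((n:ℝ)+1) b,
        ← mul_assoc, ← Real.rpow_add hn1]
      ring_nf
    linarith [hrw ▸ hlow, hsum_le]
  -- contradiction: LHS tends to infinity
  have hbz : 0 < (b : ℝ) - z := by linarith
  have htend : Filter.Tendsto (fun n : ℕ => ((n : ℝ) + 1) ^ ((b : ℝ) - z) * D ^ (-z))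
      Filter.atTop Filter.atTop := by
    apply Filter.Tendsto.atTop_mul_const (by positivity : (0:ℝ) < D ^ (-z))
    exact (tendsto_rpow_atTop hbz).comp
      (Filter.tendsto_atTop_add_const_right _ 1 tendsto_natCast_atTop_atTop)
  obtain ⟨n, hn⟩ := (htend.eventually_gt_atTop S).exists
  exact absurd (key n) (not_le.2 hn)
end

section
/- Let (a_n)_{n≥1} be a sequence of nonnegative reals with partial sums A(t) = ∑_{n ≤ t} a_n satisfying A(t) = V·t^b + O(t^{b-1}) for some V > 0 and integer b ≥ 1. Then F(z) = ∑_{n≥1} a_n·n^{-z} converges for real z > b and lim_{z → b⁺} (z − b)·F(z) = b·V. -/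
open Filter Set Real Finset
open Filter Set Real

lemma mvt_step {G G' : ℝ → ℝ} {x : ℝ}
    (hd : ∀ t ∈ Set.Icc x (x+1), HasDerivAt G (G' t) t)
    (hpos : ∀ t ∈ Set.Icc x (x+1), 0 ≤ G' t) : G x ≤ G (x+1) := by
  have hx : x < x + 1 := by linarith
  obtain ⟨c, hc, hceq⟩ := exists_hasDerivAt_eq_slope G G' hx
    (fun t ht => (hd t ht).continuousAt.continuousWithinAt)
    (fun t ht => hd t ⟨ht.1.le, ht.2.le⟩)
  have h0 : 0 ≤ G' c := hpos c ⟨hc.1.le, hc.2.le⟩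
  rw [hceq] at h0
  rw [show x + 1 - x = (1:ℝ) by ring, div_one] at h0
  linarith

-- key upper: w ≤ x^(z-s) ⇒ w*(x^(-z) - (x+1)^(-z)) ≤ z/s*(x^(-s) - (x+1)^(-s))
lemma key_upper {x s z w : ℝ} (hx : 0 < x) (hs : 0 < s) (hsz : s ≤ z)
    (hw0 : 0 ≤ w) (hw : w ≤ x ^ (z - s)) :
    w * (x ^ (-z) - (x+1) ^ (-z)) ≤ z / s * (x ^ (-s) - (x+1) ^ (-s)) := by
  have hkey : (fun t : ℝ => w * t ^ (-z) - z / s * t ^ (-s)) x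
      ≤ (fun t : ℝ => w * t ^ (-z) - z / s * t ^ (-s)) (x+1) := by
    apply mvt_step (x := x) (G' := fun t => w * (-z * t ^ (-z-1)) - z / s * (-s * t ^ (-s-1)))
    · intro t ht
      have ht0 : (0:ℝ) < t := lt_of_lt_of_le hx ht.1
      exact ((Real.hasDerivAt_rpow_const (Or.inl ht0.ne')).const_mul w).sub
        ((Real.hasDerivAt_rpow_const (p := -s) (Or.inl ht0.ne')).const_mul (z/s))
    · intro t ht
      have ht0 : (0:ℝ) < t := lt_of_lt_of_le hx ht.1
      have h1 : w * t ^ (-z-1) ≤ t ^ (z-s) * t ^ (-z-1) := by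
        have : x ^ (z-s) ≤ t ^ (z-s) := Real.rpow_le_rpow hx.le ht.1 (by linarith)
        exact mul_le_mul_of_nonneg_right (hw.trans this) (Real.rpow_nonneg ht0.le _)
      have h2 : t ^ (z-s) * t ^ (-z-1) = t ^ (-s-1) := by
        rw [← Real.rpow_add ht0]; ring_nf
      have hzs : z / s * s = z := div_mul_cancel₀ z hs.ne'
      have : w * (-z * t ^ (-z-1)) - z / s * (-s * t ^ (-s-1))
          = z * (t ^ (-s-1) - w * t ^ (-z-1)) := by field_simp; ring
      rw [this]
      have hz0 : 0 < z := hs.trans_le hsz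
      rw [← h2] at *
      nlinarith [h1]
  simp only at hkey
  linarith

lemma key_lower {x s z w : ℝ} (hx : 0 < x) (hs : 0 < s) (hsz : s ≤ z)
    (hw : (x+1) ^ (z - s) ≤ w) :
    z / s * (x ^ (-s) - (x+1) ^ (-s)) ≤ w * (x ^ (-z) - (x+1) ^ (-z)) := by
  have hkey : (fun t : ℝ => z / s * t ^ (-s) - w * t ^ (-z)) x
      ≤ (fun t : ℝ => z / s * t ^ (-s) - w * t ^ (-z)) (x+1) := by
    apply mvt_step (x := x) (G' := fun t => z / s * (-s * t ^ (-s-1)) - w * (-z * t ^ (-z-1)))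
    · intro t ht
      have ht0 : (0:ℝ) < t := lt_of_lt_of_le hx ht.1
      exact ((Real.hasDerivAt_rpow_const (p := -s) (Or.inl ht0.ne')).const_mul (z/s)).sub
        ((Real.hasDerivAt_rpow_const (Or.inl ht0.ne')).const_mul w)
    · intro t ht
      have ht0 : (0:ℝ) < t := lt_of_lt_of_le hx ht.1
      have h1 : t ^ (z-s) * t ^ (-z-1) ≤ w * t ^ (-z-1) := by
        have : t ^ (z-s) ≤ (x+1) ^ (z-s) := Real.rpow_le_rpow ht0.le ht.2 (by linarith)
        exact mul_le_mul_of_nonneg_right (this.trans hw) (Real.rpow_nonneg ht0.le _)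
      have h2 : t ^ (z-s) * t ^ (-z-1) = t ^ (-s-1) := by
        rw [← Real.rpow_add ht0]; ring_nf
      have : z / s * (-s * t ^ (-s-1)) - w * (-z * t ^ (-z-1))
          = z * (w * t ^ (-z-1) - t ^ (-s-1)) := by field_simp; ring
      rw [this]
      have hz0 : 0 < z := hs.trans_le hsz
      rw [← h2]
      nlinarith [h1]
  simp only at hkey
  linarith

lemma key_one {x z : ℝ} (hx : 0 < x) (hz : 0 < z) :
    x ^ (-z) - (x+1) ^ (-z) ≤ z * x ^ (-(z+1)) := by
  have hkey : (fun t : ℝ => t ^ (-z) + z * x ^ (-(z+1)) * t) x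
      ≤ (fun t : ℝ => t ^ (-z) + z * x ^ (-(z+1)) * t) (x+1) := by
    apply mvt_step (G := fun t : ℝ => t ^ (-z) + z * x ^ (-(z+1)) * t) (x := x) (G' := fun t => -z * t ^ (-z-1) + z * x ^ (-(z+1)))
    · intro t ht
      have ht0 : (0:ℝ) < t := lt_of_lt_of_le hx ht.1
      have h1 := (Real.hasDerivAt_rpow_const (p := -z) (Or.inl ht0.ne')).add
        ((hasDerivAt_id t).const_mul (z * x ^ (-(z+1))))
      exact h1.congr_deriv (by ring)
    · intro t ht
      have ht0 : (0:ℝ) < t := lt_of_lt_of_le hx ht.1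
      have h1 : t ^ (-z-1) ≤ x ^ (-z-1) :=
        Real.rpow_le_rpow_of_nonpos hx ht.1 (by linarith)
      have : -(z+1) = -z-1 := by ring
      rw [this]
      nlinarith [h1]
  simp only at hkey
  nlinarith [hkey]

lemma summable_aux {p : ℝ} (hp : p < -1) : Summable (fun n : ℕ => ((n:ℝ)+1) ^ p) := by
  have h := (summable_nat_add_iff (f := fun n : ℕ => (n:ℝ) ^ p) 1).mpr
    (Real.summable_nat_rpow.mpr hp)
  simpa [Nat.cast_add, Nat.cast_one] using h

lemma tendsto_shift_rpow {s : ℝ} (hs : 0 < s) :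
    Tendsto (fun N : ℕ => ((N:ℝ)+1) ^ (-s)) atTop (nhds 0) :=
  (tendsto_rpow_neg_atTop hs).comp
    (tendsto_atTop_add_const_right atTop 1 tendsto_natCast_atTop_atTop)

lemma telescope_sum (s : ℝ) (N : ℕ) :
    ∑ n ∈ Finset.range N, (((n:ℝ)+1) ^ (-s) - ((n:ℝ)+2) ^ (-s)) = 1 - ((N:ℝ)+1) ^ (-s) := by
  have h := Finset.sum_range_sub' (f := fun k : ℕ => ((k:ℝ)+1) ^ (-s)) N
  simp only [Nat.cast_zero, zero_add, Real.one_rpow, Nat.cast_add, Nat.cast_one] at h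
  rw [← h]
  apply Finset.sum_congr rfl
  intro i _
  norm_num
  ring_nf

lemma telescope_hasSum {s : ℝ} (hs : 0 < s) :
    HasSum (fun n : ℕ => ((n:ℝ)+1) ^ (-s) - ((n:ℝ)+2) ^ (-s)) 1 := by
  have hnn : ∀ n : ℕ, 0 ≤ ((n:ℝ)+1) ^ (-s) - ((n:ℝ)+2) ^ (-s) := fun n =>
    sub_nonneg.2 (Real.rpow_le_rpow_of_nonpos (by positivity) (by linarith) (by linarith))
  have hsum : Summable (fun n : ℕ => ((n:ℝ)+1) ^ (-s) - ((n:ℝ)+2) ^ (-s)) := by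
    apply summable_of_sum_range_le hnn (c := 1)
    intro n
    rw [telescope_sum]
    have : 0 ≤ ((n:ℝ)+1) ^ (-s) := Real.rpow_nonneg (by positivity) _
    linarith
  have h2 : Tendsto (fun N => ∑ n ∈ Finset.range N, (((n:ℝ)+1) ^ (-s) - ((n:ℝ)+2) ^ (-s)))
      atTop (nhds 1) := by
    simp only [telescope_sum]
    simpa using tendsto_const_nhds.sub (tendsto_shift_rpow hs)
  have heq : (∑' n : ℕ, (((n:ℝ)+1) ^ (-s) - ((n:ℝ)+2) ^ (-s))) = 1 :=
    tendsto_nhds_unique hsum.hasSum.tendsto_sum_nat h2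
  have h3 := hsum.hasSum
  rwa [heq] at h3
  
lemma pow_sub_pow_le {y : ℝ} (hy : 0 ≤ y) (b : ℕ) :
    (y+1) ^ b - y ^ b ≤ b * (y+1) ^ (b-1) := by
  have h := geom_sum₂_mul (y+1) y b
  rw [add_sub_cancel_left, mul_one] at h
  rw [← h]
  calc ∑ i ∈ Finset.range b, (y+1)^i * y^(b-1-i)
      ≤ ∑ i ∈ Finset.range b, (y+1)^(b-1) := by
        apply Finset.sum_le_sum; intro i hi
        have hib : i < b := Finset.mem_range.mp hi
        have h2 : (y+1)^i * y^(b-1-i) ≤ (y+1)^i * (y+1)^(b-1-i) :=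
          mul_le_mul_of_nonneg_left (pow_le_pow_left₀ hy (by linarith) _) (by positivity)
        rw [← pow_add, show i + (b-1-i) = b-1 from by omega] at h2
        exact h2
    _ = b * (y+1)^(b-1) := by simp [mul_comm]
noncomputable def stmtApart (a : ℕ → ℝ) (m : ℕ) : ℝ := ∑ k ∈ Finset.Icc 1 m, a k

lemma stmtApart_succ (a : ℕ → ℝ) (n : ℕ) :
    stmtApart a (n+1) = stmtApart a n + a (n+1) := by
  unfold stmtApart
  rw [Finset.sum_Icc_succ_top (by omega : 1 ≤ n+1)]

lemma stmtApart_nonneg {a : ℕ → ℝ} (ha : ∀ n, 1 ≤ n → 0 ≤ a n) (m : ℕ) :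
    0 ≤ stmtApart a m :=
  Finset.sum_nonneg fun k hk => ha k (Finset.mem_Icc.mp hk).1

lemma abel_id (a : ℕ → ℝ) (z : ℝ) (N : ℕ) :
    ∑ n ∈ Finset.range N, a (n+1) * ((n:ℝ)+1)^(-z)
      = (∑ n ∈ Finset.range N, stmtApart a (n+1) * (((n:ℝ)+1)^(-z) - ((n:ℝ)+2)^(-z)))
        + stmtApart a N * ((N:ℝ)+1)^(-z) := by
  induction N with
  | zero => simp [stmtApart]
  | succ N ih =>
    rw [Finset.sum_range_succ, Finset.sum_range_succ, ih, stmtApart_succ]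
    push_cast
    rw [show ((N:ℝ)+1+1) = (N:ℝ)+2 by ring]
    ring

noncomputable def Kc : ℝ := ∑' n : ℕ, ((n:ℝ)+1)^(-2:ℝ)

lemma Kc_nonneg : 0 ≤ Kc := tsum_nonneg fun n => Real.rpow_nonneg (by positivity) _

lemma Sneg2 : Summable (fun n : ℕ => ((n:ℝ)+1)^(-2:ℝ)) := summable_aux (by norm_num)
lemma main_bound (a : ℕ → ℝ) (ha : ∀ n, 1 ≤ n → 0 ≤ a n) (V C : ℝ) (hV : 0 < V)
    (hC0 : 0 ≤ C) (b : ℕ) (hb : 1 ≤ b)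
    (EA : ∀ m : ℕ, |stmtApart a m - V * (m:ℝ)^b| ≤ C * (m:ℝ)^(b-1))
    (z : ℝ) (hz : (b:ℝ) < z) :
    Summable (fun n : ℕ => a (n + 1) * ((n : ℝ) + 1) ^ (-z)) ∧
    V*z - (z-(b:ℝ)) * (V*((b:ℝ)*z*2^b) + C*z) * Kc
        ≤ (z-(b:ℝ)) * ∑' n : ℕ, a (n + 1) * ((n : ℝ) + 1) ^ (-z) ∧
    (z-(b:ℝ)) * ∑' n : ℕ, a (n + 1) * ((n : ℝ) + 1) ^ (-z)
        ≤ V*z + (z-(b:ℝ)) * (C*z) * Kc := by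
  have hb1 : (1:ℝ) ≤ (b:ℝ) := by exact_mod_cast hb
  have hz0 : 0 < z := by linarith
  have hs : 0 < z - (b:ℝ) := by linarith
  set s : ℝ := z - (b:ℝ) with hsdef
  have hx0 : ∀ n : ℕ, (0:ℝ) < (n:ℝ)+1 := fun n => by positivity
  have hx1 : ∀ n : ℕ, (1:ℝ) ≤ (n:ℝ)+1 := fun n => by have := Nat.cast_nonneg (α:=ℝ) n; linarith
  have hxb : ∀ n : ℕ, ((n:ℝ)+1)^b = ((n:ℝ)+1) ^ ((b:ℝ)) := fun n => (Real.rpow_natCast _ b).symm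
  have hxb1 : ∀ n : ℕ, ((n:ℝ)+1)^(b-1) = ((n:ℝ)+1) ^ ((b:ℝ)-1) := by
    intro n
    rw [← Real.rpow_natCast _ (b-1), Nat.cast_sub hb, Nat.cast_one]
  have hmulpow : ∀ n : ℕ, ∀ p q : ℝ, ((n:ℝ)+1)^p * ((n:ℝ)+1)^q = ((n:ℝ)+1)^(p+q) :=
    fun n p q => (Real.rpow_add (hx0 n) p q).symm
  have hcast : ∀ n : ℕ, ((n+1:ℕ):ℝ) = (n:ℝ)+1 := fun n => by push_cast; ring
  have hcd0 : ∀ n : ℕ, 0 ≤ ((n:ℝ)+1)^(-z) - ((n:ℝ)+2)^(-z) := fun n =>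
    sub_nonneg.2 (Real.rpow_le_rpow_of_nonpos (hx0 n) (by linarith) (by linarith))
  have hcd : ∀ n : ℕ, ((n:ℝ)+1)^(-z) - ((n:ℝ)+2)^(-z) ≤ z * ((n:ℝ)+1)^(-(z+1)) := by
    intro n
    have h := key_one (x := (n:ℝ)+1) (hx0 n) hz0
    rwa [show ((n:ℝ)+1)+1 = (n:ℝ)+2 by ring] at h
  have hbz2 : ∀ n : ℕ, ((n:ℝ)+1)^((b:ℝ)-z-2) ≤ ((n:ℝ)+1)^(-2:ℝ) := fun n =>
    Real.rpow_le_rpow_of_exponent_le (hx1 n) (by linarith)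
  have S1 : Summable (fun n : ℕ => ((n:ℝ)+1)^((b:ℝ)-z-1)) := summable_aux (by linarith)
  have S2 := Sneg2
  have Sd : Summable (fun n : ℕ => ((n:ℝ)+1)^(-s) - ((n:ℝ)+2)^(-s)) :=
    (telescope_hasSum hs).summable
  have hdsum : ∑' n : ℕ, (((n:ℝ)+1)^(-s) - ((n:ℝ)+2)^(-s)) = 1 := (telescope_hasSum hs).tsum_eq
  -- bound on a
  have haB : ∀ n : ℕ, a (n+1) ≤ (V*(b:ℝ) + 2*C) * ((n:ℝ)+1)^(b-1) := by
    intro n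
    have e1 := (abs_le.mp (EA (n+1))).2
    have e2 := (abs_le.mp (EA n)).1
    rw [hcast n] at e1
    have hAs := stmtApart_succ a n
    have hps := pow_sub_pow_le (y := (n:ℝ)) (Nat.cast_nonneg n) b
    have hVps : V * (((n:ℝ)+1)^b - (n:ℝ)^b) ≤ V * ((b:ℝ) * ((n:ℝ)+1)^(b-1)) :=
      mul_le_mul_of_nonneg_left hps hV.le
    have hmono : C * ((n:ℝ))^(b-1) ≤ C * ((n:ℝ)+1)^(b-1) :=
      mul_le_mul_of_nonneg_left (pow_le_pow_left₀ (Nat.cast_nonneg n) (by linarith) _) hC0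
    nlinarith [e1, e2, hVps, hmono]
  -- summability of f
  have hf0 : ∀ n : ℕ, 0 ≤ a (n+1) * ((n:ℝ)+1)^(-z) := fun n =>
    mul_nonneg (ha (n+1) (by omega)) (Real.rpow_nonneg (hx0 n).le _)
  have hfle : ∀ n : ℕ, a (n+1) * ((n:ℝ)+1)^(-z)
      ≤ (V*(b:ℝ)+2*C) * ((n:ℝ)+1)^((b:ℝ)-z-1) := by
    intro n
    calc a (n+1) * ((n:ℝ)+1)^(-z)
        ≤ ((V*(b:ℝ)+2*C) * ((n:ℝ)+1)^(b-1)) * ((n:ℝ)+1)^(-z) :=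
          mul_le_mul_of_nonneg_right (haB n) (Real.rpow_nonneg (hx0 n).le _)
      _ = (V*(b:ℝ)+2*C) * (((n:ℝ)+1)^((b:ℝ)-1) * ((n:ℝ)+1)^(-z)) := by rw [hxb1]; ring
      _ = (V*(b:ℝ)+2*C) * ((n:ℝ)+1)^((b:ℝ)-z-1) := by
          rw [hmulpow n ((b:ℝ)-1) (-z), show (b:ℝ)-1 + -z = (b:ℝ)-z-1 by ring]
  have Sumf : Summable (fun n : ℕ => a (n + 1) * ((n : ℝ) + 1) ^ (-z)) :=
    Summable.of_nonneg_of_le hf0 hfle (S1.mul_left _)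
  -- upper bound on partial sums function g
  have hAub : ∀ m : ℕ, stmtApart a m ≤ (V+C) * ((m:ℝ)+1)^b := by
    intro m
    have e1 := (abs_le.mp (EA m)).2
    have h1 : V * ((m:ℝ))^b ≤ V * ((m:ℝ)+1)^b :=
      mul_le_mul_of_nonneg_left (pow_le_pow_left₀ (Nat.cast_nonneg m) (by linarith) _) hV.le
    have h2 : C * ((m:ℝ))^(b-1) ≤ C * ((m:ℝ)+1)^b := by
      apply mul_le_mul_of_nonneg_left _ hC0
      calc ((m:ℝ))^(b-1) ≤ ((m:ℝ)+1)^(b-1) :=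
            pow_le_pow_left₀ (Nat.cast_nonneg m) (by linarith) _
        _ ≤ ((m:ℝ)+1)^b := pow_le_pow_right₀ (hx1 m) (by omega)
    nlinarith [e1, h1, h2]
  have hg0 : ∀ n : ℕ, 0 ≤ stmtApart a (n+1) * (((n:ℝ)+1)^(-z) - ((n:ℝ)+2)^(-z)) := fun n =>
    mul_nonneg (stmtApart_nonneg ha _) (hcd0 n)
  have hn2b : ∀ n : ℕ, ((n:ℝ)+2)^b ≤ 2^b * ((n:ℝ)+1)^b := by
    intro n
    rw [← mul_pow]
    exact pow_le_pow_left₀ (by positivity) (by linarith [hx1 n]) _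
  have hgle : ∀ n : ℕ, stmtApart a (n+1) * (((n:ℝ)+1)^(-z) - ((n:ℝ)+2)^(-z))
      ≤ ((V+C) * 2^b * z) * ((n:ℝ)+1)^((b:ℝ)-z-1) := by
    intro n
    have hA1 : stmtApart a (n+1) ≤ (V+C) * (2^b * ((n:ℝ)+1)^b) := by
      have := hAub (n+1)
      rw [hcast n] at this
      have h2 : (V+C) * ((n:ℝ)+1+1)^b ≤ (V+C) * (2^b * ((n:ℝ)+1)^b) := by
        apply mul_le_mul_of_nonneg_left _ (by linarith)
        rw [show ((n:ℝ)+1+1) = (n:ℝ)+2 by ring]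
        exact hn2b n
      linarith
    calc stmtApart a (n+1) * (((n:ℝ)+1)^(-z) - ((n:ℝ)+2)^(-z))
        ≤ stmtApart a (n+1) * (z * ((n:ℝ)+1)^(-(z+1))) :=
          mul_le_mul_of_nonneg_left (hcd n) (stmtApart_nonneg ha _)
      _ ≤ ((V+C) * (2^b * ((n:ℝ)+1)^b)) * (z * ((n:ℝ)+1)^(-(z+1))) :=
          mul_le_mul_of_nonneg_right hA1 (by positivity)
      _ = ((V+C) * 2^b * z) * (((n:ℝ)+1)^((b:ℝ)) * ((n:ℝ)+1)^(-(z+1))) := by rw [← hxb]; ring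
      _ = ((V+C) * 2^b * z) * ((n:ℝ)+1)^((b:ℝ)-z-1) := by
          rw [hmulpow n ((b:ℝ)) (-(z+1)), show (b:ℝ) + -(z+1) = (b:ℝ)-z-1 by ring]
  have Sg : Summable (fun n : ℕ => stmtApart a (n+1) * (((n:ℝ)+1)^(-z) - ((n:ℝ)+2)^(-z))) :=
    Summable.of_nonneg_of_le hg0 hgle (S1.mul_left _)
  -- tail tends to zero
  have htail : Tendsto (fun N : ℕ => stmtApart a N * ((N:ℝ)+1)^(-z)) atTop (nhds 0) := by
    apply squeeze_zero (g := fun N : ℕ => (V+C) * ((N:ℝ)+1)^(-s))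
      (fun N => mul_nonneg (stmtApart_nonneg ha _) (Real.rpow_nonneg (hx0 N).le _))
    · intro N
      calc stmtApart a N * ((N:ℝ)+1)^(-z)
          ≤ ((V+C) * ((N:ℝ)+1)^b) * ((N:ℝ)+1)^(-z) :=
            mul_le_mul_of_nonneg_right (hAub N) (Real.rpow_nonneg (hx0 N).le _)
        _ = (V+C) * (((N:ℝ)+1)^((b:ℝ)) * ((N:ℝ)+1)^(-z)) := by rw [← hxb]; ring
        _ = (V+C) * ((N:ℝ)+1)^(-s) := by
            rw [hmulpow N ((b:ℝ)) (-z), show (b:ℝ) + -z = -s by rw [hsdef]; ring]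
    · have := (tendsto_shift_rpow hs).const_mul (V+C)
      simpa using this
  -- tsum f = tsum g
  have hfg : (∑' n : ℕ, a (n + 1) * ((n : ℝ) + 1) ^ (-z))
      = ∑' n : ℕ, stmtApart a (n+1) * (((n:ℝ)+1)^(-z) - ((n:ℝ)+2)^(-z)) := by
    have h1 := Sumf.hasSum.tendsto_sum_nat
    have h2 := Sg.hasSum.tendsto_sum_nat
    have h3 : Tendsto (fun N => ∑ n ∈ Finset.range N, a (n + 1) * ((n : ℝ) + 1) ^ (-z)) atTop
        (nhds (∑' n : ℕ, stmtApart a (n+1) * (((n:ℝ)+1)^(-z) - ((n:ℝ)+2)^(-z)))) := by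
      have h4 := h2.add htail
      rw [add_zero] at h4
      exact h4.congr fun N => (abel_id a z N).symm
    exact tendsto_nhds_unique h1 h3
  -- decomposition
  set t1 : ℕ → ℝ := fun n => ((n:ℝ)+1)^b * (((n:ℝ)+1)^(-z) - ((n:ℝ)+2)^(-z)) with ht1def
  set t2 : ℕ → ℝ := fun n =>
    (stmtApart a (n+1) - V*((n:ℝ)+1)^b) * (((n:ℝ)+1)^(-z) - ((n:ℝ)+2)^(-z)) with ht2def
  have St1 : Summable t1 := by
    apply Summable.of_nonneg_of_le (fun n => mul_nonneg (by positivity) (hcd0 n))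
      (fun n => ?_) (S1.mul_left z)
    calc t1 n ≤ ((n:ℝ)+1)^b * (z * ((n:ℝ)+1)^(-(z+1))) :=
          mul_le_mul_of_nonneg_left (hcd n) (by positivity)
      _ = z * (((n:ℝ)+1)^((b:ℝ)) * ((n:ℝ)+1)^(-(z+1))) := by rw [hxb]; ring
      _ = z * ((n:ℝ)+1)^((b:ℝ)-z-1) := by
          rw [hmulpow n ((b:ℝ)) (-(z+1)), show (b:ℝ) + -(z+1) = (b:ℝ)-z-1 by ring]
  have ht2b : ∀ n : ℕ, |t2 n| ≤ (C*z) * ((n:ℝ)+1)^(-2:ℝ) := by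
    intro n
    have e1 := EA (n+1)
    rw [hcast n] at e1
    rw [ht2def]
    simp only
    rw [abs_mul, abs_of_nonneg (hcd0 n)]
    calc |stmtApart a (n+1) - V*((n:ℝ)+1)^b| * (((n:ℝ)+1)^(-z) - ((n:ℝ)+2)^(-z))
        ≤ (C * ((n:ℝ)+1)^(b-1)) * (z * ((n:ℝ)+1)^(-(z+1))) :=
          mul_le_mul e1 (hcd n) (hcd0 n) (by positivity)
      _ = (C*z) * (((n:ℝ)+1)^((b:ℝ)-1) * ((n:ℝ)+1)^(-(z+1))) := by rw [hxb1]; ring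
      _ = (C*z) * ((n:ℝ)+1)^((b:ℝ)-z-2) := by
          rw [hmulpow n ((b:ℝ)-1) (-(z+1)), show (b:ℝ)-1 + -(z+1) = (b:ℝ)-z-2 by ring]
      _ ≤ (C*z) * ((n:ℝ)+1)^(-2:ℝ) :=
          mul_le_mul_of_nonneg_left (hbz2 n) (by positivity)
  have St2abs : Summable (fun n => |t2 n|) :=
    Summable.of_nonneg_of_le (fun n => abs_nonneg _) ht2b (S2.mul_left (C*z))
  have St2 : Summable t2 := by
    apply Summable.of_norm
    simpa [Real.norm_eq_abs] using St2abs
  have hT2 : |∑' n, t2 n| ≤ (C*z) * Kc := by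
    calc |∑' n, t2 n| ≤ ∑' n, |t2 n| := by
          simpa [Real.norm_eq_abs] using
            norm_tsum_le_tsum_norm (f := t2) (by simpa [Real.norm_eq_abs] using St2abs)
      _ ≤ ∑' n : ℕ, (C*z) * ((n:ℝ)+1)^(-2:ℝ) := Summable.tsum_le_tsum ht2b St2abs (S2.mul_left _)
      _ = (C*z) * Kc := by rw [tsum_mul_left]; rfl
  -- T1 upper bound
  have hzs : z - s = (b:ℝ) := by rw [hsdef]; ring
  have ht1u : ∀ n : ℕ, t1 n ≤ (z/s) * (((n:ℝ)+1)^(-s) - ((n:ℝ)+2)^(-s)) := by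
    intro n
    have h := key_upper (x := (n:ℝ)+1) (s := s) (z := z) (w := ((n:ℝ)+1)^b)
      (hx0 n) hs (by rw [hsdef]; linarith) (by positivity) (by rw [hzs, ← hxb])
    rwa [show ((n:ℝ)+1)+1 = (n:ℝ)+2 by ring] at h
  have hT1u : ∑' n, t1 n ≤ z/s := by
    calc ∑' n, t1 n ≤ ∑' n : ℕ, (z/s) * (((n:ℝ)+1)^(-s) - ((n:ℝ)+2)^(-s)) :=
          Summable.tsum_le_tsum ht1u St1 (Sd.mul_left _)
      _ = (z/s) * 1 := by rw [tsum_mul_left, hdsum]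
      _ = z/s := mul_one _
  -- T1 lower bound
  set e : ℕ → ℝ := fun n =>
    (b:ℝ) * ((n:ℝ)+2)^(b-1) * (((n:ℝ)+1)^(-z) - ((n:ℝ)+2)^(-z)) with hedef
  have ht1l : ∀ n : ℕ, (z/s) * (((n:ℝ)+1)^(-s) - ((n:ℝ)+2)^(-s)) - e n ≤ t1 n := by
    intro n
    have hkl := key_lower (x := (n:ℝ)+1) (s := s) (z := z) (w := ((n:ℝ)+2)^b)
      (hx0 n) hs (by rw [hsdef]; linarith)
      (by rw [hzs, show ((n:ℝ)+1)+1 = (n:ℝ)+2 by ring, Real.rpow_natCast])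
    rw [show ((n:ℝ)+1)+1 = (n:ℝ)+2 by ring] at hkl
    have hps := pow_sub_pow_le (y := (n:ℝ)+1) (by positivity) b
    rw [show ((n:ℝ)+1)+1 = (n:ℝ)+2 by ring] at hps
    have h2 := mul_le_mul_of_nonneg_right hps (hcd0 n)
    rw [ht1def, hedef]
    simp only
    nlinarith [hkl, h2]
  have heb : ∀ n : ℕ, e n ≤ ((b:ℝ)*z*2^b) * ((n:ℝ)+1)^(-2:ℝ) := by
    intro n
    have hp1 : ((n:ℝ)+2)^(b-1) ≤ 2^b * ((n:ℝ)+1)^(b-1) := by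
      calc ((n:ℝ)+2)^(b-1) ≤ (2*((n:ℝ)+1))^(b-1) :=
            pow_le_pow_left₀ (by positivity) (by linarith [hx1 n]) _
        _ = 2^(b-1) * ((n:ℝ)+1)^(b-1) := by rw [mul_pow]
        _ ≤ 2^b * ((n:ℝ)+1)^(b-1) := by
            apply mul_le_mul_of_nonneg_right _ (by positivity)
            exact pow_le_pow_right₀ (by norm_num) (by omega)
    rw [hedef]
    simp only
    calc (b:ℝ) * ((n:ℝ)+2)^(b-1) * (((n:ℝ)+1)^(-z) - ((n:ℝ)+2)^(-z))
        ≤ (b:ℝ) * (2^b * ((n:ℝ)+1)^(b-1)) * (z * ((n:ℝ)+1)^(-(z+1))) := by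
          apply mul_le_mul _ (hcd n) (hcd0 n) (by positivity)
          exact mul_le_mul_of_nonneg_left hp1 (by positivity)
      _ = ((b:ℝ)*z*2^b) * (((n:ℝ)+1)^((b:ℝ)-1) * ((n:ℝ)+1)^(-(z+1))) := by rw [hxb1]; ring
      _ = ((b:ℝ)*z*2^b) * ((n:ℝ)+1)^((b:ℝ)-z-2) := by
          rw [hmulpow n ((b:ℝ)-1) (-(z+1)), show (b:ℝ)-1 + -(z+1) = (b:ℝ)-z-2 by ring]
      _ ≤ ((b:ℝ)*z*2^b) * ((n:ℝ)+1)^(-2:ℝ) :=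
          mul_le_mul_of_nonneg_left (hbz2 n) (by positivity)
  have he0 : ∀ n : ℕ, 0 ≤ e n := fun n =>
    mul_nonneg (by positivity) (hcd0 n)
  have Se : Summable e :=
    Summable.of_nonneg_of_le he0 heb (S2.mul_left _)
  have hEsum : ∑' n, e n ≤ ((b:ℝ)*z*2^b) * Kc := by
    calc ∑' n, e n ≤ ∑' n : ℕ, ((b:ℝ)*z*2^b) * ((n:ℝ)+1)^(-2:ℝ) :=
          Summable.tsum_le_tsum heb Se (S2.mul_left _)
      _ = ((b:ℝ)*z*2^b) * Kc := by rw [tsum_mul_left]; rfl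
  have hT1l : z/s - ((b:ℝ)*z*2^b) * Kc ≤ ∑' n, t1 n := by
    have hls : Summable (fun n : ℕ =>
        (z/s) * (((n:ℝ)+1)^(-s) - ((n:ℝ)+2)^(-s)) - e n) := (Sd.mul_left _).sub Se
    have h1 : ∑' n : ℕ, ((z/s) * (((n:ℝ)+1)^(-s) - ((n:ℝ)+2)^(-s)) - e n)
        = (z/s) - ∑' n, e n := by
      rw [Summable.tsum_sub (Sd.mul_left _) Se, tsum_mul_left, hdsum, mul_one]
    have h2 := Summable.tsum_le_tsum ht1l hls St1
    rw [h1] at h2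
    linarith
  -- assemble
  have hsumfg : (∑' n : ℕ, a (n + 1) * ((n : ℝ) + 1) ^ (-z))
      = V * ∑' n, t1 n + ∑' n, t2 n := by
    rw [hfg]
    rw [show (fun n : ℕ => stmtApart a (n+1) * (((n:ℝ)+1)^(-z) - ((n:ℝ)+2)^(-z)))
      = fun n => V * t1 n + t2 n from funext fun n => by rw [ht1def, ht2def]; simp only; ring]
    rw [Summable.tsum_add (St1.mul_left V) St2, tsum_mul_left]
  have hsz : s * (z/s) = z := by field_simp
  refine ⟨Sumf, ?_, ?_⟩
  · rw [hsumfg]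
    have hT1l' : z - s * (((b:ℝ)*z*2^b) * Kc) ≤ s * ∑' n, t1 n := by
      calc z - s * (((b:ℝ)*z*2^b) * Kc) = s * (z/s - ((b:ℝ)*z*2^b) * Kc) := by
            rw [mul_sub, hsz]
        _ ≤ s * ∑' n, t1 n := mul_le_mul_of_nonneg_left hT1l hs.le
    have hVT1 := mul_le_mul_of_nonneg_left hT1l' hV.le
    have hT2l : -(C*z*Kc) ≤ ∑' n, t2 n := by
      have := (abs_le.mp hT2).1
      linarith
    have hsT2 := mul_le_mul_of_nonneg_left hT2l hs.le
    calc V*z - s * (V*((b:ℝ)*z*2^b) + C*z) * Kc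
        = V*(z - s * (((b:ℝ)*z*2^b) * Kc)) + s * (-(C*z*Kc)) := by ring
      _ ≤ V*(s * ∑' n, t1 n) + s * ∑' n, t2 n := add_le_add hVT1 hsT2
      _ = s * (V * ∑' n, t1 n + ∑' n, t2 n) := by ring
  · rw [hsumfg]
    have hT1u' : s * ∑' n, t1 n ≤ z := by
      have h := mul_le_mul_of_nonneg_left hT1u hs.le
      rwa [hsz] at h
    have hVT1 := mul_le_mul_of_nonneg_left hT1u' hV.le
    have hT2u : ∑' n, t2 n ≤ C*z*Kc := by
      have := (abs_le.mp hT2).2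
      linarith
    have hsT2 := mul_le_mul_of_nonneg_left hT2u hs.le
    calc s * (V * ∑' n, t1 n + ∑' n, t2 n)
        = V*(s * ∑' n, t1 n) + s * ∑' n, t2 n := by ring
      _ ≤ V*z + s * (C*z*Kc) := add_le_add hVT1 hsT2
      _ = V*z + s * (C*z) * Kc := by ring
/-- A Tauberian-type statement: if `a_n ≥ 0` and `A(t) = ∑_{n ≤ t} a_n = V·t^b + O(t^{b-1})`,
then `F(z) = ∑ a_n n^{-z}` converges for real `z > b` and `lim_{z→b⁺} (z-b)·F(z) = b·V`. -/
theorem stmt_10 (a : ℕ → ℝ) (ha : ∀ n, 1 ≤ n → 0 ≤ a n)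
    (V : ℝ) (hV : 0 < V) (b : ℕ) (hb : 1 ≤ b)
    (hA : ∃ C : ℝ, ∀ t : ℝ, 1 ≤ t →
      |(∑ n ∈ Finset.Icc 1 ⌊t⌋₊, a n) - V * t ^ b| ≤ C * t ^ (b - 1)) :
    (∀ z : ℝ, (b : ℝ) < z → Summable fun n : ℕ => a (n + 1) * ((n : ℝ) + 1) ^ (-z)) ∧
    Tendsto (fun z : ℝ => (z - b) * ∑' n : ℕ, a (n + 1) * ((n : ℝ) + 1) ^ (-z))
      (nhdsWithin (b : ℝ) (Set.Ioi (b : ℝ))) (nhds ((b : ℝ) * V)) := by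
  obtain ⟨C, hC⟩ := hA
  have hC0 : 0 ≤ C := by
    have h := hC 1 le_rfl
    simp only [one_pow, mul_one] at h
    exact le_trans (abs_nonneg _) h
  have EA : ∀ m : ℕ, |stmtApart a m - V * (m:ℝ)^b| ≤ C * (m:ℝ)^(b-1) := by
    intro m
    match m with
    | 0 =>
      have h0 : stmtApart a 0 = 0 := by simp [stmtApart]
      rw [h0]
      rw [Nat.cast_zero, zero_pow (by omega : b ≠ 0)]
      simp only [mul_zero, sub_zero, abs_zero]
      positivity
    | (k+1) =>
      have h1 : (1:ℝ) ≤ ((k+1:ℕ):ℝ) := by exact_mod_cast Nat.succ_le_succ (Nat.zero_le k)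
      have h := hC ((k+1:ℕ):ℝ) h1
      rw [Nat.floor_natCast] at h
      exact h
  refine ⟨fun z hz => (main_bound a ha V C hV hC0 b hb EA z hz).1, ?_⟩
  have hlow : Tendsto (fun z : ℝ => V*z - (z-(b:ℝ)) * (V*((b:ℝ)*z*2^b) + C*z) * Kc)
      (nhdsWithin (b:ℝ) (Set.Ioi (b:ℝ))) (nhds ((b:ℝ)*V)) := by
    have hval : V*(b:ℝ) - ((b:ℝ)-(b:ℝ)) * (V*((b:ℝ)*(b:ℝ)*2^b) + C*(b:ℝ)) * Kc = (b:ℝ)*V := by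
      ring
    have hcont : Continuous (fun z : ℝ => V*z - (z-(b:ℝ)) * (V*((b:ℝ)*z*2^b) + C*z) * Kc) := by
      continuity
    have := hcont.tendsto (b:ℝ)
    rw [hval] at this
    exact this.mono_left nhdsWithin_le_nhds
  have hup : Tendsto (fun z : ℝ => V*z + (z-(b:ℝ)) * (C*z) * Kc)
      (nhdsWithin (b:ℝ) (Set.Ioi (b:ℝ))) (nhds ((b:ℝ)*V)) := by
    have hval : V*(b:ℝ) + ((b:ℝ)-(b:ℝ)) * (C*(b:ℝ)) * Kc = (b:ℝ)*V := by ring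
    have hcont : Continuous (fun z : ℝ => V*z + (z-(b:ℝ)) * (C*z) * Kc) := by continuity
    have := hcont.tendsto (b:ℝ)
    rw [hval] at this
    exact this.mono_left nhdsWithin_le_nhds
  apply tendsto_of_tendsto_of_tendsto_of_le_of_le' hlow hup
  · filter_upwards [self_mem_nhdsWithin] with z hz
    exact (main_bound a ha V C hV hC0 b hb EA z hz).2.1
  · filter_upwards [self_mem_nhdsWithin] with z hz
    exact (main_bound a ha V C hV hC0 b hb EA z hz).2.2
end
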